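/- Let q be a prime power with gcd(q,3)=1, and let α > β be positive integers. If gcd(|α−2β|, q+1)=1, then X^α + X^β + 1 has no roots in μ_{q+1}. -/
import Mathlib


/-- If `q` is a prime power coprime to 3 and `α > β > 0`, then under the stated
gcd condition the polynomial `X^α + X^β + 1` has no roots in `μ_{q+1} ⊆ F_{q^2}^*`. -/
theorem stmt_2 (q α β : ℕ) (hq3 : Nat.Coprime q 3)
    (p n : ℕ) (hp : p.Prime) (hn : 0 < n) (hqpn : q = p ^ n)
    (hβ : 0 < β) (hαβ : β < α)
    (hgcd : Nat.gcd ((α : ℤ) - 2 * β).natAbs (q + 1) = 1)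
    (F : Type*) [Field F] [Fintype F] (hF : Fintype.card F = q ^ 2)
    (a : F) (ha : a ≠ 0) (hμ : a ^ (q + 1) = 1) :
    a ^ α + a ^ β + 1 ≠ 0 := by
  intro h
  have hq2 : 2 ≤ q := by
    rw [hqpn]
    calc 2 ≤ p := hp.two_le
    _ ≤ p ^ n := Nat.le_self_pow hn.ne' p
  -- characteristic of F is p
  obtain ⟨r, hr⟩ := CharP.exists F
  haveI : CharP F r := hr
  have hrp : r.Prime := CharP.char_is_prime F r
  haveI : Fact r.Prime := ⟨hrp⟩
  obtain ⟨m, -, hcard⟩ := FiniteField.card F r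
  have hrP : r = p := by
    have h1 : r ∣ p ^ (n * 2) := by
      rw [pow_mul, ← hqpn, ← hF, hcard]
      exact dvd_pow_self r m.ne_zero
    exact (Nat.prime_dvd_prime_iff_eq hrp hp).mp (hrp.dvd_of_dvd_pow h1)
  subst hrP
  haveI : ExpChar F r := ExpChar.prime hrp
  -- Frobenius
  have hq0 : q ≠ 0 := by omega
  have hfrob : (a ^ α) ^ q + (a ^ β) ^ q + 1 = 0 := by
    have e : (a ^ α + a ^ β + 1) ^ q = (a ^ α) ^ q + (a ^ β) ^ q + 1 ^ q := by
      rw [hqpn, add_pow_char_pow, add_pow_char_pow]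
    rw [one_pow] at e
    rw [← e, h, zero_pow hq0]
  have haq : a ^ q = a⁻¹ := by
    have := hμ
    rw [pow_succ] at this
    field_simp
    linear_combination this
  have hinv : ∀ k : ℕ, (a ^ k) ^ q = (a ^ k)⁻¹ := by
    intro k
    rw [← pow_mul, mul_comm, pow_mul, haq, inv_pow]
  rw [hinv, hinv] at hfrob
  set u := a ^ α with hu'
  set v := a ^ β with hv'
  have hu : u ≠ 0 := pow_ne_zero _ ha
  have hv : v ≠ 0 := pow_ne_zero _ ha
  have e1 : v + u + u * v = 0 := by
    field_simp at hfrob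
    linear_combination hfrob
  have huv : u * v = 1 := by linear_combination e1 - h
  have hkey : u = v ^ 2 := by linear_combination (1 - v) * h + huv
  -- move to units
  set A : Fˣ := Units.mk0 a ha with hA'
  have hApow : ∀ k : ℕ, ((A ^ k : Fˣ) : F) = a ^ k := by intro k; rw [Units.val_pow_eq_pow_val]; rfl
  have hA1 : A ^ α = A ^ (2 * β) := by
    ext
    rw [hApow, hApow, mul_comm, pow_mul]
    exact hkey
  have hz : A ^ ((α : ℤ) - 2 * β) = 1 := by
    have hc : ((2 * β : ℕ) : ℤ) = 2 * (β : ℤ) := by push_cast; ring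
    rw [zpow_sub, ← hc, zpow_natCast, zpow_natCast, hA1]
    simp
  have hd1 : orderOf A ∣ ((α : ℤ) - 2 * β).natAbs := by
    have : (orderOf A : ℤ) ∣ ((α : ℤ) - 2 * β) := orderOf_dvd_iff_zpow_eq_one.mpr hz
    exact Int.natCast_dvd_natCast.mp (Int.dvd_natAbs.mpr this)
  have hd2 : orderOf A ∣ q + 1 := by
    apply orderOf_dvd_of_pow_eq_one
    ext
    rw [hApow]
    exact hμ
  have hord : orderOf A = 1 := Nat.eq_one_of_dvd_coprimes (by rw [Nat.Coprime, hgcd]) hd1 hd2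
  have hA1' : A = 1 := orderOf_eq_one_iff.mp hord
  have ha1 : a = 1 := by
    rw [show a = (A : F) from rfl, hA1', Units.val_one]
  have h' : a ^ α + a ^ β + 1 = 0 := h
  rw [ha1] at h'
  simp only [one_pow] at h'
  have h3 : ((3 : ℕ) : F) = 0 := by push_cast; linear_combination h'
  have hr3 : r = 3 := by
    have := (CharP.cast_eq_zero_iff F r 3).mp h3
    exact ((Nat.prime_dvd_prime_iff_eq hrp (by norm_num)).mp this)
  have h3q : (3 : ℕ) ∣ q := by
    rw [hqpn, ← hr3]
    exact dvd_pow_self r hn.ne'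
  have := Nat.Coprime.eq_one_of_dvd hq3.symm h3q
  omega
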